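/- Let k be an even positive integer and let n be a multiple of k/2 with n ≥ 2k. Let 𝒮̃ = {{i·k/2 + 1, …, i·k/2 + k} (mod n) : i ∈ [2n/k]} be the collection of 2n/k cyclic windows of length k starting at multiples of k/2. Consider the test that picks a uniformly random pair (S,S') of windows in 𝒮̃ with S ∩ S' ≠ ∅ (i.e., a uniformly random edge of the graph on 𝒮̃ whose edges are the intersecting pairs, including self loops), and accepts an input function F iff F(S) and F(S') agree on every coordinate of S ∩ S'. If F passes this test with probability at least 1 − ε, then there exists a majority decoding a ∈ {0,1}^n of F such that F(S) = a|_S for at least a (1 − 3ε) fraction of the windows S ∈ 𝒮̃. -/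

import Mathlib

open Finset

/-- `a` is a majority decoding of `F` on the domain `V`: for every coordinate `i`,
`F(S)_i = a_i` for at least half of the sets `S ∈ V` containing `i`. -/
def IsMajorityDecoding {ι : Type*} [DecidableEq ι] (V : Finset (Finset ι))
    (F : Finset ι → ι → Bool) (a : ι → Bool) : Prop :=
  ∀ i : ι, (V.filter (fun S => i ∈ S)).card ≤
    2 * (V.filter (fun S => i ∈ S ∧ F S i = a i)).card

/-- The cyclic window `{s, s+1, …, s+k-1}` (arithmetic modulo `n`). -/
def slidingWindow (n k : ℕ) (s : ZMod n) : Finset (ZMod n) :=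
  (Finset.range k).image (fun (j : ℕ) => s + (j : ZMod n))

/-- The sub-sampled sliding window domain `𝒮̃`: the `2n/k` cyclic windows of length `k`
whose starting positions are the multiples of `k/2`. -/
def subSlidingDomain (n k : ℕ) : Finset (Finset (ZMod n)) :=
  (Finset.range (2 * n / k)).image (fun (i : ℕ) => slidingWindow n k ((i * (k / 2) : ℕ) : ZMod n))



namespace DPSW

def nxt (t i : ℕ) : ℕ := if i + 1 = t then 0 else i + 1
def prv (t i : ℕ) : ℕ := if i = 0 then t - 1 else i - 1

def W (n h : ℕ) (i : ℕ) : Finset (ZMod n) := slidingWindow n (2*h) ((i*h : ℕ) : ZMod n)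

lemma qbound {h q r i j : ℕ} (hr : r < h) (hj : j < 2*h) (he : h*q + r = h*i + j) :
    q = i ∨ q = i + 1 := by
  rcases Nat.lt_or_ge q i with hlt | hge
  · exfalso
    have h1 : h * (q+1) ≤ h * i := Nat.mul_le_mul_left h hlt
    rw [Nat.mul_succ] at h1
    linarith
  · rcases Nat.lt_or_ge q (i+2) with h2 | h2
    · omega
    · exfalso
      have h1 : h * (i+2) ≤ h * q := Nat.mul_le_mul_left h h2
      have hexp : h*(i+2) = h*i + 2*h := by ring
      linarith

variable {n h t : ℕ}

lemma val_div_lt [NeZero n] (hh : 0 < h) (hn : n = h*t) (x : ZMod n) : x.val / h < t := by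
  have hv := ZMod.val_lt x
  rw [Nat.div_lt_iff_lt_mul hh]
  have e : n = t*h := by rw [hn]; ring
  exact lt_of_lt_of_eq hv e

lemma mem_W [NeZero n] (hh : 0 < h) (hn : n = h * t) (ht : 4 ≤ t) {i : ℕ} (hi : i < t)
    (x : ZMod n) : x ∈ W n h i ↔ (x.val / h = i ∨ x.val / h = nxt t i) := by
  have hq0 := Nat.div_add_mod x.val h
  set q := x.val / h with hqdef
  set r := x.val % h with hrdef
  have hr : r < h := Nat.mod_lt _ hh
  have hqt : q < t := val_div_lt hh hn x
  have hvn : x.val < n := ZMod.val_lt x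
  have hcst : ((x.val : ℕ) : ZMod n) = x := ZMod.natCast_rightInverse x
  constructor
  · intro hxW
    obtain ⟨j, hj, hxe⟩ : ∃ j < 2*h, x = ((i*h + j : ℕ) : ZMod n) := by
      simp only [W, slidingWindow, Finset.mem_image, Finset.mem_range] at hxW
      obtain ⟨j, hj, hje⟩ := hxW
      exact ⟨j, hj, by rw [← hje]; push_cast; ring⟩
    have hval : x.val = (i*h + j) % n := by rw [hxe, ZMod.val_natCast]
    by_cases hcase : i*h + j < n
    · rw [Nat.mod_eq_of_lt hcase] at hval
      have he : h*q + r = h*i + j := by rw [hq0, hval]; ring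
      rcases qbound hr hj he with h1 | h1
      · exact Or.inl h1
      · right
        simp only [nxt]
        split_ifs with hh2 <;> omega
    · push_neg at hcase
      have hi2 : i = t - 1 := by
        by_contra hne
        have h3 : i + 2 ≤ t := by omega
        have h4 : h*(i+2) ≤ h*t := Nat.mul_le_mul_left h h3
        have hexp : h*(i+2) = i*h + 2*h := by ring
        rw [hn] at hcase
        linarith
      subst hi2
      have e1 : (t-1)*h + h = t*h := by
        have e0 : t - 1 + 1 = t := by omega
        calc (t-1)*h + h = (t-1+1)*h := by ring
          _ = t*h := by rw [e0]
      have e2 : n = t*h := by rw [hn]; ring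
      have hjh : h ≤ j := by linarith
      have hxv : x.val = j - h := by
        have : (t-1)*h + j = n + (j - h) := by omega
        rw [this] at hval
        rw [Nat.add_mod_left] at hval
        rw [hval]
        exact Nat.mod_eq_of_lt (by omega)
      right
      have hq00 : q = 0 := by
        rw [hqdef, hxv]
        exact Nat.div_eq_of_lt (by omega)
      simp only [nxt]
      split_ifs with hh2 <;> omega
  · intro h1
    simp only [W, slidingWindow, Finset.mem_image, Finset.mem_range]
    rcases h1 with h1 | h1
    · refine ⟨r, by omega, ?_⟩
      have : x.val = i*h + r := by rw [← hq0, h1]; ring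
      rw [← hcst, this]; push_cast; ring
    · simp only [nxt] at h1
      split_ifs at h1 with hh2
      · -- i + 1 = t, q = 0, x.val = r
        refine ⟨h + r, by omega, ?_⟩
        have hxv : x.val = r := by rw [← hq0, h1]; ring
        have e3 : i*h + h = t*h := by
          calc i*h + h = (i+1)*h := by ring
            _ = t*h := by rw [hh2]
        have e4 : n = t*h := by rw [hn]; ring
        have e5 : (i*h + (h + r) : ℕ) = n + r := by omega
        rw [← hcst, hxv]
        calc ((i*h : ℕ) : ZMod n) + ((h + r : ℕ) : ZMod n)
            = ((i*h + (h + r) : ℕ) : ZMod n) := by push_cast; ring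
          _ = ((n + r : ℕ) : ZMod n) := by rw [e5]
          _ = ((r : ℕ) : ZMod n) := by push_cast; simp
      · refine ⟨h + r, by omega, ?_⟩
        have hxv : x.val = i*h + (h + r) := by rw [← hq0, h1]; ring
        rw [← hcst, hxv]; push_cast; ring
end DPSW

namespace DPSW
variable {n h t : ℕ}

lemma start_val [NeZero n] (hh : 0 < h) (hn : n = h*t) {i : ℕ} (hi : i < t) :
    ((i*h : ℕ) : ZMod n).val = i*h := by
  rw [ZMod.val_natCast]
  apply Nat.mod_eq_of_lt
  have : i*h < t*h := Nat.mul_lt_mul_of_lt_of_le hi (le_refl h) (by omega)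
  have e : n = t*h := by rw [hn]; ring
  omega

lemma start_mem [NeZero n] (hh : 0 < h) (hn : n = h*t) (ht : 4 ≤ t) {i : ℕ} (hi : i < t) :
    ((i*h : ℕ) : ZMod n) ∈ W n h i := by
  rw [mem_W hh hn ht hi]
  left
  rw [start_val hh hn hi]
  exact Nat.mul_div_cancel _ hh

lemma W_inj [NeZero n] (hh : 0 < h) (hn : n = h*t) (ht : 4 ≤ t) {i j : ℕ}
    (hi : i < t) (hj : j < t) (he : W n h i = W n h j) : i = j := by
  have h1 := start_mem hh hn ht hi
  have h2 := start_mem hh hn ht hj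
  rw [he, mem_W hh hn ht hj, start_val hh hn hi, Nat.mul_div_cancel _ hh] at h1
  rw [← he, mem_W hh hn ht hi, start_val hh hn hj, Nat.mul_div_cancel _ hh] at h2
  simp only [nxt] at h1 h2
  split_ifs at h1 h2 <;> omega
end DPSW


namespace DPSW
variable {n h t : ℕ}

lemma domain_eq {k : ℕ} (hh : 0 < h) (hk2 : k = 2*h) (hn : n = h*t) :
    subSlidingDomain n k = (Finset.range t).image (W n h) := by
  unfold subSlidingDomain
  have h1 : 2*n/k = t := by
    rw [hk2, hn]
    have e : 2*(h*t) = (2*h)*t := by ring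
    rw [e, Nat.mul_div_cancel_left _ (by omega)]
  have h2 : k/2 = h := by omega
  rw [h1, h2, hk2]
  rfl
end DPSW


open DPSW

/-- Let `k` be even and positive, and let `n` be a multiple of `k/2` with
`n ≥ 2k`.  If an input function `F` passes, with probability at least `1 − ε`, the test which
picks a uniformly random pair of intersecting windows of `𝒮̃` (self loops included) and checks
agreement on the intersection, then there is a majority decoding `a ∈ {0,1}^n` of `F` with
`F(S) = a|_S` for at least a `(1 − 3ε)` fraction of the windows `S ∈ 𝒮̃`. -/
theorem directProduct_subSlidingWindow (n k : ℕ) (hk : 0 < k) (hkeven : Even k)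
    (hdvd : k / 2 ∣ n) (hn : 2 * k ≤ n)
    (F : Finset (ZMod n) → ZMod n → Bool) (ε : ℝ)
    (hpass :
      (1 - ε) *
          (((subSlidingDomain n k ×ˢ subSlidingDomain n k).filter
            (fun p => (p.1 ∩ p.2).Nonempty)).card : ℝ) ≤
        (((subSlidingDomain n k ×ˢ subSlidingDomain n k).filter
            (fun p => (p.1 ∩ p.2).Nonempty ∧ ∀ i ∈ p.1 ∩ p.2, F p.1 i = F p.2 i)).card : ℝ)) :
    ∃ a : ZMod n → Bool, IsMajorityDecoding (subSlidingDomain n k) F a ∧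
      (1 - 3 * ε) * ((subSlidingDomain n k).card : ℝ) ≤
        (((subSlidingDomain n k).filter (fun S => ∀ i ∈ S, F S i = a i)).card : ℝ) := by
  classical
  obtain ⟨h, hk2'⟩ := hkeven
  have hk2 : k = 2*h := by omega
  have hh : 0 < h := by omega
  have hkd : k/2 = h := by omega
  rw [hkd] at hdvd
  obtain ⟨t, hn_eq⟩ := hdvd
  have ht : 4 ≤ t := by
    by_contra hlt
    push_neg at hlt
    have h3 : h * t ≤ h * 3 := Nat.mul_le_mul_left h (by omega)
    linarith
  haveI : NeZero n := ⟨by rw [hn_eq]; exact Nat.mul_ne_zero (by omega) (by omega)⟩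
  have hD : subSlidingDomain n k = (Finset.range t).image (W n h) := domain_eq hh hk2 hn_eq
  have hinj : Set.InjOn (W n h) (Finset.range t) := fun i hi j hj he =>
    W_inj hh hn_eq ht (by simpa using hi) (by simpa using hj) he
  have hDcard : (subSlidingDomain n k).card = t := by
    rw [hD, Finset.card_image_of_injOn hinj, Finset.card_range]
  set a : ZMod n → Bool := fun x => F (W n h (x.val / h)) x with ha
  -- majority decoding
  have hmaj : IsMajorityDecoding (subSlidingDomain n k) F a := by
    intro x
    have hqt : x.val / h < t := val_div_lt hh hn_eq x
    have h2le : ((subSlidingDomain n k).filter (fun S => x ∈ S)).card ≤ 2 := by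
      rw [hD, Finset.filter_image]
      refine le_trans Finset.card_image_le ?_
      refine le_trans (Finset.card_le_card
        (?_ : _ ⊆ ({x.val / h, prv t (x.val/h)} : Finset ℕ))) ?_
      · intro i hi
        simp only [Finset.mem_filter, Finset.mem_range] at hi
        obtain ⟨hit, hmem⟩ := hi
        rw [mem_W hh hn_eq ht hit] at hmem
        simp only [Finset.mem_insert, Finset.mem_singleton, nxt, prv] at hmem ⊢
        split_ifs at hmem ⊢ <;> omega
      · exact le_trans (Finset.card_insert_le _ _) (by simp)
    have h1le : 1 ≤ ((subSlidingDomain n k).filter (fun S => x ∈ S ∧ F S x = a x)).card := by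
      refine Finset.card_pos.mpr ⟨W n h (x.val / h), ?_⟩
      rw [Finset.mem_filter]
      refine ⟨?_, ?_, rfl⟩
      · rw [hD]; exact Finset.mem_image_of_mem _ (Finset.mem_range.mpr hqt)
      · exact (mem_W hh hn_eq ht hqt x).mpr (Or.inl rfl)
    omega
  refine ⟨a, hmaj, ?_⟩
  -- index-side sets
  set good : ℕ → Prop := fun i => ∀ x ∈ W n h i, F (W n h i) x = a x with hgood
  set B := (Finset.range t).filter (fun i => ¬ good i) with hB
  have hGcard : ((subSlidingDomain n k).filter (fun S => ∀ x ∈ S, F S x = a x)).card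
      = ((Finset.range t).filter good).card := by
    rw [hD, Finset.filter_image,
      Finset.card_image_of_injOn (hinj.mono (Finset.coe_subset.mpr (Finset.filter_subset _ _)))]
  have hsplit : ((Finset.range t).filter good).card + B.card = t := by
    rw [hB]
    have := Finset.card_filter_add_card_filter_not (s := Finset.range t) (p := good)
    simpa using this
  -- product image
  have hprod : subSlidingDomain n k ×ˢ subSlidingDomain n k
      = ((Finset.range t) ×ˢ (Finset.range t)).image (Prod.map (W n h) (W n h)) := by
    rw [hD]
    ext p
    simp only [Finset.mem_product, Finset.mem_image, Finset.mem_range, Prod.ext_iff, Prod.map]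
    constructor
    · rintro ⟨⟨i, hi, hi'⟩, ⟨j, hj, hj'⟩⟩
      exact ⟨(i, j), ⟨hi, hj⟩, hi', hj'⟩
    · rintro ⟨⟨i, j⟩, ⟨hi, hj⟩, hi', hj'⟩
      exact ⟨⟨i, hi, hi'⟩, ⟨j, hj, hj'⟩⟩
  have hpinj : Set.InjOn (Prod.map (W n h) (W n h))
      ((((Finset.range t) ×ˢ (Finset.range t) : Finset (ℕ × ℕ))) : Set (ℕ × ℕ)) := by
    rintro ⟨i, j⟩ hij ⟨i', j'⟩ hij' hpe
    simp only [Finset.mem_coe, Finset.mem_product, Finset.mem_range] at hij hij'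
    simp only [Prod.map, Prod.ext_iff] at hpe
    exact Prod.ext_iff.mpr ⟨W_inj hh hn_eq ht hij.1 hij'.1 hpe.1,
      W_inj hh hn_eq ht hij.2 hij'.2 hpe.2⟩
  have key : ∀ (p : Finset (ZMod n) × Finset (ZMod n) → Prop) (q : ℕ × ℕ → Prop)
      [DecidablePred p] [DecidablePred q],
      (∀ i j : ℕ, q (i, j) ↔ p (W n h i, W n h j)) →
      ((subSlidingDomain n k ×ˢ subSlidingDomain n k).filter p).card
      = (((Finset.range t) ×ˢ (Finset.range t)).filter q).card := by
    intro p q _ _ hpq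
    rw [hprod, Finset.filter_image,
      Finset.card_image_of_injOn (hpinj.mono (Finset.coe_subset.mpr (Finset.filter_subset _ _)))]
    exact congrArg Finset.card (Finset.filter_congr (fun x _ => ((hpq x.1 x.2).symm)))
  set rt2 := (Finset.range t) ×ˢ (Finset.range t) with hrt2
  set Tidx := rt2.filter (fun q : ℕ × ℕ => (W n h q.1 ∩ W n h q.2).Nonempty) with hTidx
  set Pidx := rt2.filter (fun q : ℕ × ℕ => (W n h q.1 ∩ W n h q.2).Nonempty ∧
      ∀ x ∈ W n h q.1 ∩ W n h q.2, F (W n h q.1) x = F (W n h q.2) x) with hPidx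
  set Flidx := rt2.filter (fun q : ℕ × ℕ => (W n h q.1 ∩ W n h q.2).Nonempty ∧
      ¬ ∀ x ∈ W n h q.1 ∩ W n h q.2, F (W n h q.1) x = F (W n h q.2) x) with hFlidx
  have eT : ((subSlidingDomain n k ×ˢ subSlidingDomain n k).filter
      (fun p => (p.1 ∩ p.2).Nonempty)).card = Tidx.card :=
    key _ _ (fun i j => Iff.rfl)
  have eP : ((subSlidingDomain n k ×ˢ subSlidingDomain n k).filter
      (fun p => (p.1 ∩ p.2).Nonempty ∧ ∀ i ∈ p.1 ∩ p.2, F p.1 i = F p.2 i)).card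
      = Pidx.card :=
    key _ _ (fun i j => Iff.rfl)
  -- T ≤ 3t
  have hTle : Tidx.card ≤ 3 * t := by
    have hsub : Tidx ⊆ (Finset.range t).biUnion
        (fun b => {(b, b), (b, nxt t b), (nxt t b, b)}) := by
      rintro ⟨i, j⟩ hij
      simp only [hTidx, hrt2, Finset.mem_filter, Finset.mem_product, Finset.mem_range] at hij
      obtain ⟨⟨hi, hj⟩, x, hx⟩ := hij
      rw [Finset.mem_inter] at hx
      have e1 := (mem_W hh hn_eq ht hi x).mp hx.1
      have e2 := (mem_W hh hn_eq ht hj x).mp hx.2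
      simp only [Finset.mem_biUnion, Finset.mem_range, Finset.mem_insert,
        Finset.mem_singleton, Prod.ext_iff]
      rcases e1 with e1 | e1 <;> rcases e2 with e2 | e2
      · exact ⟨i, hi, Or.inl ⟨rfl, by omega⟩⟩
      · exact ⟨j, hj, Or.inr (Or.inr ⟨by omega, rfl⟩)⟩
      · exact ⟨i, hi, Or.inr (Or.inl ⟨rfl, by omega⟩)⟩
      · refine ⟨i, hi, Or.inl ⟨rfl, ?_⟩⟩
        simp only [nxt] at e1 e2
        split_ifs at e1 e2 <;> omega
    refine le_trans (Finset.card_le_card hsub) (le_trans Finset.card_biUnion_le ?_)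
    have hone : ∀ b ∈ Finset.range t,
        ({(b, b), (b, nxt t b), (nxt t b, b)} : Finset (ℕ × ℕ)).card ≤ 3 := by
      intro b _
      refine le_trans (Finset.card_insert_le _ _) ?_
      have := Finset.card_insert_le (b, nxt t b) ({(nxt t b, b)} : Finset (ℕ × ℕ))
      simp only [Finset.card_singleton] at this
      omega
    refine le_trans (Finset.sum_le_sum hone) ?_
    simp [Finset.sum_const, Finset.card_range, Nat.mul_comm]
  have hT1 : 1 ≤ Tidx.card := by
    refine Finset.card_pos.mpr ⟨(0, 0), ?_⟩
    simp only [hTidx, hrt2, Finset.mem_filter, Finset.mem_product, Finset.mem_range]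
    refine ⟨⟨by omega, by omega⟩, ?_⟩
    rw [Finset.inter_self]
    exact ⟨_, start_mem hh hn_eq ht (show 0 < t by omega)⟩
  have hPF : Pidx.card + Flidx.card ≤ Tidx.card := by
    rw [← Finset.card_union_of_disjoint (by
      rw [Finset.disjoint_left]
      intro x hx hx'
      simp only [hPidx, hFlidx, Finset.mem_filter] at hx hx'
      exact hx'.2.2 hx.2.2)]
    refine Finset.card_le_card ?_
    intro x hx
    simp only [hPidx, hFlidx, hTidx, Finset.mem_union, Finset.mem_filter] at hx ⊢
    tauto
  have hBF : B.card ≤ Flidx.card := by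
    refine Finset.card_le_card_of_injOn (fun i => (i, nxt t i)) ?_ ?_
    · intro i hiB
      simp only [hB, Finset.mem_coe, Finset.mem_filter, Finset.mem_range] at hiB
      obtain ⟨hit, hbad⟩ := hiB
      have hnt : nxt t i < t := by simp only [nxt]; split_ifs <;> omega
      have hnagree : ¬ ∀ x ∈ W n h i ∩ W n h (nxt t i),
          F (W n h i) x = F (W n h (nxt t i)) x := by
        intro hag
        apply hbad
        intro x hx
        rcases (mem_W hh hn_eq ht hit x).mp hx with hq | hq
        · show F (W n h i) x = a x
          rw [ha]; dsimp only; rw [hq]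
        · have hxq : x ∈ W n h (nxt t i) := by
            rw [mem_W hh hn_eq ht hnt]; exact Or.inl hq
          have hag' := hag x (Finset.mem_inter.mpr ⟨hx, hxq⟩)
          rw [hag', ha]; dsimp only; rw [hq]
      have hne : (W n h i ∩ W n h (nxt t i)).Nonempty := by
        push_neg at hnagree
        obtain ⟨x, hx, _⟩ := hnagree
        exact ⟨x, hx⟩
      simp only [hFlidx, hrt2, Finset.mem_coe, Finset.mem_filter, Finset.mem_product,
        Finset.mem_range]
      exact ⟨⟨hit, hnt⟩, hne, hnagree⟩
    · intro i _ j _ he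
      exact (Prod.ext_iff.mp he).1
  -- final arithmetic over ℝ
  have hpass2 : (1 - ε) * ((Tidx.card : ℝ)) ≤ ((Pidx.card : ℝ)) := by
    rw [← eT, ← eP]
    convert hpass using 8
  clear hpass
  have c1 : (Pidx.card : ℝ) + (Flidx.card : ℝ) ≤ (Tidx.card : ℝ) := by exact_mod_cast hPF
  have c2 : (B.card : ℝ) ≤ (Flidx.card : ℝ) := by exact_mod_cast hBF
  have c3 : (Tidx.card : ℝ) ≤ 3 * (t : ℝ) := by exact_mod_cast hTle
  have c4 : (1 : ℝ) ≤ (Tidx.card : ℝ) := by exact_mod_cast hT1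
  have c5 : (((Finset.range t).filter good).card : ℝ) + (B.card : ℝ) = (t : ℝ) := by
    exact_mod_cast hsplit
  have h6 : 0 ≤ ε * (Tidx.card : ℝ) := by nlinarith [hpass2, c1, c2]
  have hε : 0 ≤ ε := by
    by_contra hneg
    push_neg at hneg
    have : ε * (Tidx.card : ℝ) < 0 := mul_neg_of_neg_of_pos hneg (by linarith)
    linarith
  have hmul : ε * (Tidx.card : ℝ) ≤ ε * (3 * (t : ℝ)) := mul_le_mul_of_nonneg_left c3 hε
  have main : (1 - 3 * ε) * ((t : ℕ) : ℝ) ≤ ((((Finset.range t).filter good).card : ℕ) : ℝ) := by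
    nlinarith [hpass2, c1, c2, c5, hmul]
  refine le_trans (le_trans (le_of_eq ?_) main) (Nat.cast_le.mpr ?_)
  · rw [hDcard]
  · refine Finset.card_le_card_of_injOn (W n h) ?_ ?_
    · intro i hi
      simp only [Finset.mem_coe, Finset.mem_filter, Finset.mem_range] at hi ⊢
      constructor
      · rw [hD]
        exact Finset.mem_image_of_mem _ (Finset.mem_range.mpr hi.1)
        
      · intro x hx
        exact hi.2 x hx
    · exact fun i hi j hj he =>
        hinj (by simpa using (Finset.mem_filter.mp (Finset.mem_coe.mp hi)).1)
          (by simpa using (Finset.mem_filter.mp (Finset.mem_coe.mp hj)).1) he
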